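/- Let β = max{β_ls, β_cs} and σ = min{α_as, α_ls, α_cs}, and set ε = ρN / (α_sa/σ + 1 + βρN/σ). Then for any solution of the colony migration system in Ω, liminf_{t→∞} S(t) ≥ ε, i.e., the searching population S is uniformly persistent with lower bound ε. -/

import Mathlib

open Filter

/-- uniform persistence of the searching population S with lower
bound ε = ρN / (α_sa/σ + 1 + βρN/σ), where β = max{β_ls,β_cs},
σ = min{α_as,α_ls,α_cs}, for solutions in Ω. -/
theorem stmt2_persistence_S
    (asa aas aal alc als acs bls bcs ρ N Q₁ : ℝ)
    (hasa : 0 < asa) (haas : 0 < aas) (haal : 0 < aal) (halc : 0 < alc)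
    (hals : 0 < als) (hacs : 0 < acs) (hbls : 0 < bls) (hbcs : 0 < bcs)
    (hρ : 0 < ρ) (hρ1 : ρ < 1) (hN : 0 < N) (hQ : Q₁ = 0 ∨ Q₁ = 1)
    (S A L C : ℝ → ℝ)
    (hS : ∀ t, HasDerivAt S
      (-asa * S t - bls * S t * L t - bcs * S t * C t + aas * A t + als * L t + acs * C t) t)
    (hA : ∀ t, HasDerivAt A
      (asa * S t + bls * S t * L t + bcs * S t * C t - (aas + aal) * A t) t)
    (hL : ∀ t, HasDerivAt L (aal * A t - alc * Q₁ * L t - als * L t) t)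
    (hC : ∀ t, HasDerivAt C (alc * Q₁ * L t - acs * C t) t)
    (hΩ : ∀ t ≥ (0 : ℝ), 0 ≤ S t ∧ 0 ≤ A t ∧ 0 ≤ L t ∧ 0 ≤ C t ∧
      S t + A t + L t + C t = ρ * N) :
    (ρ * N / (asa / min (min aas als) acs + 1 +
        max bls bcs * ρ * N / min (min aas als) acs)) ≤
      liminf (fun t => S t) atTop := by
  set σ : ℝ := min (min aas als) acs with hσdef
  set β : ℝ := max bls bcs with hβdef
  have hσ : 0 < σ := lt_min (lt_min haas hals) hacs
  have hβ : 0 < β := lt_of_lt_of_le hbls (le_max_left _ _)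
  set k : ℝ := asa + σ + β * ρ * N with hkdef
  set c : ℝ := σ * ρ * N with hcdef
  have hk : 0 < k := by positivity
  have hσaas : σ ≤ aas := le_trans (min_le_left _ _) (min_le_left _ _)
  have hσals : σ ≤ als := le_trans (min_le_left _ _) (min_le_right _ _)
  have hσacs : σ ≤ acs := min_le_right _ _
  -- key differential inequality
  have key : ∀ t ≥ (0:ℝ), c - k * S t ≤
      -asa * S t - bls * S t * L t - bcs * S t * C t + aas * A t + als * L t + acs * C t := by
    intro t ht
    obtain ⟨hS0, hA0, hL0, hC0, hsum⟩ := hΩ t ht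
    nlinarith [mul_nonneg (sub_nonneg.mpr hσaas) hA0,
      mul_nonneg (sub_nonneg.mpr hσals) hL0,
      mul_nonneg (sub_nonneg.mpr hσacs) hC0,
      mul_nonneg (mul_nonneg (sub_nonneg.mpr (le_max_left bls bcs : bls ≤ β)) hS0) hL0,
      mul_nonneg (mul_nonneg (sub_nonneg.mpr (le_max_right bls bcs : bcs ≤ β)) hS0) hC0,
      mul_nonneg (mul_nonneg hβ.le hS0) (by linarith : (0:ℝ) ≤ ρ * N - L t - C t)]
  set g : ℝ → ℝ := fun t => Real.exp (k * t) * (S t - c / k) with hgdef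
  have hg : ∀ t, HasDerivAt g
      (Real.exp (k * t) * ((-asa * S t - bls * S t * L t - bcs * S t * C t
        + aas * A t + als * L t + acs * C t) + k * S t - c)) t := by
    intro t
    have h1 : HasDerivAt (fun t : ℝ => Real.exp (k * t)) (Real.exp (k * t) * k) t := by
      simpa using (HasDerivAt.exp ((hasDerivAt_id t).const_mul k))
    have h2 : HasDerivAt (fun t => S t - c / k)
        (-asa * S t - bls * S t * L t - bcs * S t * C t + aas * A t + als * L t + acs * C t) t :=
      (hS t).sub_const _
    have := h1.fun_mul h2
    refine this.congr_deriv ?_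
    linear_combination (-Real.exp (k * t)) * (mul_div_cancel₀ c hk.ne' : k * (c / k) = c)
  have hgdiff : Differentiable ℝ g := fun t => (hg t).differentiableAt
  have hmono : MonotoneOn g (Set.Ici (0:ℝ)) := by
    apply monotoneOn_of_deriv_nonneg (convex_Ici 0) hgdiff.continuous.continuousOn
      hgdiff.differentiableOn
    intro t ht
    rw [interior_Ici] at ht
    rw [(hg t).deriv]
    have := key t (le_of_lt ht)
    have h3 : 0 ≤ (-asa * S t - bls * S t * L t - bcs * S t * C t
        + aas * A t + als * L t + acs * C t) + k * S t - c := by linarith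
    positivity
  have hlow : ∀ t ≥ (0:ℝ), c / k + (S 0 - c / k) * Real.exp (-(k * t)) ≤ S t := by
    intro t ht
    have := hmono (Set.self_mem_Ici) (Set.mem_Ici.mpr ht) ht
    simp only [hgdef, mul_zero, Real.exp_zero, one_mul] at this
    have hexp : 0 < Real.exp (k * t) := Real.exp_pos _
    rw [Real.exp_neg]
    have := (div_le_iff₀ hexp).mpr (by linarith [this] : S 0 - c / k ≤ (S t - c / k) * Real.exp (k * t))
    have h4 : (S 0 - c / k) * (Real.exp (k * t))⁻¹ ≤ S t - c / k := by
      rw [mul_inv_le_iff₀ hexp]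
      linarith [this, (div_le_iff₀ hexp).mp this]
    linarith
  set lower : ℝ → ℝ := fun t => c / k + (S 0 - c / k) * Real.exp (-(k * t)) with hlowdef
  have htend : Tendsto lower atTop (nhds (c / k)) := by
    have h1 : Tendsto (fun t : ℝ => -(k * t)) atTop atBot := by
      apply tendsto_neg_atBot_iff.mpr
      exact Tendsto.const_mul_atTop hk tendsto_id
    have h2 : Tendsto (fun t : ℝ => Real.exp (-(k * t))) atTop (nhds 0) :=
      Real.tendsto_exp_atBot.comp h1
    have := ((h2.const_mul (S 0 - c / k)).const_add (c / k))
    simpa using this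
  have hev : lower ≤ᶠ[atTop] fun t => S t :=
    eventually_atTop.mpr ⟨0, fun t ht => hlow t ht⟩
  have hbdd : IsBoundedUnder (· ≥ ·) atTop (fun t => S t) :=
    ⟨0, eventually_atTop.mpr ⟨0, fun t ht => (hΩ t ht).1⟩⟩
  have hbddlow : IsBoundedUnder (· ≥ ·) atTop lower := htend.isBoundedUnder_ge
  have hbddup : IsBoundedUnder (· ≤ ·) atTop (fun t => S t) := by
    refine isBoundedUnder_of_eventually_le (a := ρ * N) ?_
    filter_upwards [eventually_ge_atTop (0:ℝ)] with t ht
    obtain ⟨h1, h2, h3, h4, h5⟩ := hΩ t ht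
    linarith
  have hcob : IsCoboundedUnder (· ≥ ·) atTop (fun t => S t) := hbddup.isCoboundedUnder_ge
  have hliminf : c / k ≤ liminf (fun t => S t) atTop := by
    have := liminf_le_liminf hev hbddlow hcob
    rwa [htend.liminf_eq] at this
  have heq : ρ * N / (asa / σ + 1 + β * ρ * N / σ) = c / k := by
    rw [show asa / σ + 1 + β * ρ * N / σ = k / σ by field_simp; try ring]
    rw [div_div_eq_mul_div, hcdef]
    ring
  rw [heq]
  exact hliminf
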